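/- For n = 1, 2, 3, …, let X_n be a locally compact, second countable, Hausdorff topological space and A = Π_{n=1}^∞ X_n^∞ the product of the one-point compactifications. Then the equivalence relation R on A defined by x R y iff Q(x) = Q(y) — equivalently, x R y iff N(x) = N(y) and x_i = y_i for all i with 1 ≤ i ≤ N(x), where N(x) is the smallest n ≥ 0 such that x_{n+1} = ∞_{n+1} (and N(x) = ∞ if no coordinate of x is a point at infinity) — is a closed subset of A × A. -/

import Mathlib

open Filter Topology

/-- The set `W₀ = Y₀ ∪ Z`: the disjoint union of the finite products
`Y^k = X_1 × ⋯ × X_k` (with `Y^0 = {0}` a single point, the empty string) and the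
infinite product `Z = Π_{n} X_n`.  (Indices are `0`-based here: `X 0, X 1, …` play the
roles of `X_1, X_2, …`.) -/
def W0 (X : ℕ → Type) : Type := (Σ k : ℕ, ∀ i : Fin k, X i) ⊕ (∀ n, X n)

namespace W0

variable {X : ℕ → Type}

/-- A finite string, an element of `Y₀ = ∪_k Y^k ⊂ W₀`. -/
def fin (p : Σ k : ℕ, ∀ i : Fin k, X i) : W0 X := Sum.inl p

/-- An infinite string, an element of `Z = Π_n X_n ⊂ W₀`. -/
def inf (z : ∀ n, X n) : W0 X := Sum.inr z

/-- The point `0`, the empty string: the unique element of `Y^0`. -/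
def zero : W0 X := Sum.inl ⟨0, fun i => i.elim0⟩

/-- The length `ℓ(w) ∈ ℕ ∪ {∞}` of an element of `W₀`. -/
def len : W0 X → ℕ∞ := Sum.elim (fun p => (p.1 : ℕ∞)) (fun _ => ⊤)

/-- The `i`-th coordinate of an element of `W₀`, as an element of the one-point
compactification `X_i^∞`; it is taken to be `∞_i` when `i ≥ ℓ(w)`. -/
def coord (w : W0 X) (i : ℕ) : OnePoint (X i) :=
  Sum.elim
    (fun p : Σ k : ℕ, ∀ j : Fin k, X j =>
      if h : i < p.1 then ((p.2 ⟨i, h⟩ : X i) : OnePoint (X i)) else OnePoint.infty)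
    (fun z => ((z i : X i) : OnePoint (X i))) w

/-- The value of a point of `X^∞` other than `∞`. -/
noncomputable def val {Y : Type} (o : OnePoint Y) (h : o ≠ OnePoint.infty) : Y :=
  (OnePoint.ne_infty_iff_exists.mp h).choose

open Classical in
/-- The truncation map `Q : A = Π_n X_n^∞ → W₀`: `Q({x_i}) = {x_i} ∈ Z` if no
coordinate is a point at infinity; `Q({x_i}) = (x_1, …, x_n) ∈ Y^n` if `n` is smallest
with `x_{n+1} = ∞_{n+1}`; `Q({x_i}) = 0` if `x_1 = ∞_1`. -/
noncomputable def Q (x : ∀ n, OnePoint (X n)) : W0 X :=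
  if h : ∃ n, x n = OnePoint.infty then
    fin ⟨Nat.find h, fun i => val (x i) (Nat.find_min h i.isLt)⟩
  else
    inf fun n => val (x n) (fun hn => h ⟨n, hn⟩)

/-- `W₀` carries the quotient topology induced by the surjection `Q` from the product
`A = Π_n X_n^∞` of the one-point compactifications. -/
noncomputable instance [∀ n, TopologicalSpace (X n)] : TopologicalSpace (W0 X) :=
  TopologicalSpace.coinduced Q Pi.topologicalSpace

end W0


section Helpers

variable {X : ℕ → Type}

theorem W0.coe_val {Y : Type} (o : OnePoint Y) (h : o ≠ OnePoint.infty) :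
    ((W0.val o h : Y) : OnePoint Y) = o :=
  (OnePoint.ne_infty_iff_exists.mp h).choose_spec

/-- Extensionality for `W0` in terms of `len` and `coord`. -/
theorem W0.ext' (w w' : W0 X) (hlen : w.len = w'.len)
    (hcoord : ∀ i, w.coord i = w'.coord i) : w = w' := by
  cases w with
  | inl p =>
    cases w' with
    | inl p' =>
      obtain ⟨k, f⟩ := p
      obtain ⟨k', f'⟩ := p'
      have hk : k = k' := by
        simpa [W0.len, Nat.cast_inj] using hlen
      subst hk
      have hf : f = f' := by
        funext i
        have := hcoord i
        simp only [W0.coord, Sum.elim_inl, dif_pos i.isLt] at this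
        exact OnePoint.coe_eq_coe.mp this
      rw [hf]
    | inr z => simp [W0.len] at hlen
  | inr z =>
    cases w' with
    | inl p' => simp [W0.len] at hlen
    | inr z' =>
      have hz : z = z' := by
        funext i
        have := hcoord i
        simp only [W0.coord, Sum.elim_inr] at this
        exact OnePoint.coe_eq_coe.mp this
      rw [hz]

theorem W0.lt_len_Q_iff (x : ∀ n, OnePoint (X n)) (n : ℕ) :
    (n : ℕ∞) < (W0.Q x).len ↔ ∀ j ≤ n, x j ≠ OnePoint.infty := by
  classical
  by_cases hx : ∃ m, x m = OnePoint.infty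
  · simp only [W0.Q, hx, ↓reduceDIte, W0.fin, W0.len, Sum.elim_inl, Nat.cast_lt]
    exact Nat.lt_find_iff hx n
  · simp only [W0.Q, hx, ↓reduceDIte, W0.inf, W0.len, Sum.elim_inr]
    push_neg at hx
    simp only [lt_top_iff_ne_top, ne_eq, ENat.coe_ne_top, not_false_eq_true, true_iff]
    exact fun j _ => hx j

theorem W0.coord_Q_of_lt (x : ∀ n, OnePoint (X n)) (i : ℕ)
    (h : ∀ j ≤ i, x j ≠ OnePoint.infty) : (W0.Q x).coord i = x i := by
  classical
  by_cases hx : ∃ m, x m = OnePoint.infty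
  · have hi : i < Nat.find hx := (Nat.lt_find_iff hx i).mpr h
    simp only [W0.Q, hx, ↓reduceDIte, W0.fin, W0.coord, Sum.elim_inl, dif_pos hi]
    exact W0.coe_val _ _
  · simp only [W0.Q, hx, ↓reduceDIte, W0.inf, W0.coord, Sum.elim_inr]
    exact W0.coe_val _ _

theorem W0.coord_Q_of_ge (x : ∀ n, OnePoint (X n)) (i : ℕ)
    (h : ∃ j ≤ i, x j = OnePoint.infty) : (W0.Q x).coord i = OnePoint.infty := by
  classical
  obtain ⟨j, hji, hj⟩ := h
  have hx : ∃ m, x m = OnePoint.infty := ⟨j, hj⟩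
  have : ¬ i < Nat.find hx := by
    have : Nat.find hx ≤ j := Nat.find_le hj
    omega
  simp only [W0.Q, hx, ↓reduceDIte, W0.fin, W0.coord, Sum.elim_inl, dif_neg this]

theorem W0.Q_eq_Q_iff (x y : ∀ n, OnePoint (X n)) :
    W0.Q x = W0.Q y ↔ ∀ n, x n = y n ∨
      ((∃ i ≤ n, x i = OnePoint.infty) ∧ (∃ i ≤ n, y i = OnePoint.infty)) := by
  constructor
  · intro hQ n
    by_cases h : ∀ j ≤ n, x j ≠ OnePoint.infty
    · have h' : ∀ j ≤ n, y j ≠ OnePoint.infty := by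
        have := (W0.lt_len_Q_iff x n).mpr h
        rw [hQ] at this
        exact (W0.lt_len_Q_iff y n).mp this
      left
      calc x n = (W0.Q x).coord n := (W0.coord_Q_of_lt x n h).symm
        _ = (W0.Q y).coord n := by rw [hQ]
        _ = y n := W0.coord_Q_of_lt y n h'
    · push_neg at h
      right
      refine ⟨h, ?_⟩
      by_contra h''
      push_neg at h''
      have := (W0.lt_len_Q_iff y n).mpr h''
      rw [← hQ] at this
      obtain ⟨j, hji, hj⟩ := h
      exact (W0.lt_len_Q_iff x n).mp this j hji hj
  · intro hP
    have hmem : (∃ n, x n = OnePoint.infty) ↔ (∃ n, y n = OnePoint.infty) := by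
      constructor
      · rintro ⟨n, hn⟩
        rcases hP n with h | h
        · exact ⟨n, h ▸ hn⟩
        · obtain ⟨i, _, hi⟩ := h.2; exact ⟨i, hi⟩
      · rintro ⟨n, hn⟩
        rcases hP n with h | h
        · exact ⟨n, h.symm ▸ hn⟩
        · obtain ⟨i, _, hi⟩ := h.1; exact ⟨i, hi⟩
    apply W0.ext'
    · -- lengths agree
      rcases lt_trichotomy (W0.Q x).len (W0.Q y).len with hlt | heq | hlt
      · exfalso
        have hne : (W0.Q x).len ≠ ⊤ := hlt.ne_top
        obtain ⟨N, hN⟩ : ∃ N : ℕ, (W0.Q x).len = (N : ℕ∞) := by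
          cases hL : (W0.Q x).len with
          | top => exact absurd hL hne
          | coe m => exact ⟨m, rfl⟩
        have hx' : ∃ j ≤ N, x j = OnePoint.infty := by
          by_contra hc
          push_neg at hc
          have := (W0.lt_len_Q_iff x N).mpr hc
          rw [hN] at this; exact lt_irrefl _ this
        have hy' : (N : ℕ∞) < (W0.Q y).len := hN ▸ hlt
        have hy'' := (W0.lt_len_Q_iff y N).mp hy'
        obtain ⟨j, hjN, hj⟩ := hx'
        rcases hP j with h | h
        · exact hy'' j hjN (h ▸ hj)
        · obtain ⟨i, hij, hi⟩ := h.2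
          exact hy'' i (le_trans hij hjN) hi
      · exact heq
      · exfalso
        have hne : (W0.Q y).len ≠ ⊤ := hlt.ne_top
        obtain ⟨N, hN⟩ : ∃ N : ℕ, (W0.Q y).len = (N : ℕ∞) := by
          cases hL : (W0.Q y).len with
          | top => exact absurd hL hne
          | coe m => exact ⟨m, rfl⟩
        have hy' : ∃ j ≤ N, y j = OnePoint.infty := by
          by_contra hc
          push_neg at hc
          have := (W0.lt_len_Q_iff y N).mpr hc
          rw [hN] at this; exact lt_irrefl _ this
        have hx' : (N : ℕ∞) < (W0.Q x).len := hN ▸ hlt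
        have hx'' := (W0.lt_len_Q_iff x N).mp hx'
        obtain ⟨j, hjN, hj⟩ := hy'
        rcases hP j with h | h
        · exact hx'' j hjN (h.symm ▸ hj)
        · obtain ⟨i, hij, hi⟩ := h.1
          exact hx'' i (le_trans hij hjN) hi
    · -- coordinates agree
      intro i
      by_cases h : ∀ j ≤ i, x j ≠ OnePoint.infty
      · have h' : ∀ j ≤ i, y j ≠ OnePoint.infty := by
          intro j hji hj
          rcases hP j with hh | hh
          · exact h j hji (hh ▸ hj)
          · obtain ⟨k, hkj, hk⟩ := hh.1
            exact h k (le_trans hkj hji) hk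
        rw [W0.coord_Q_of_lt x i h, W0.coord_Q_of_lt y i h']
        rcases hP i with hh | hh
        · exact hh
        · obtain ⟨k, hki, hk⟩ := hh.1
          exact absurd hk (h k hki)
      · push_neg at h
        have h' : ∃ j ≤ i, y j = OnePoint.infty := by
          obtain ⟨j, hji, hj⟩ := h
          rcases hP j with hh | hh
          · exact ⟨j, hji, hh ▸ hj⟩
          · obtain ⟨k, hkj, hk⟩ := hh.2
            exact ⟨k, le_trans hkj hji, hk⟩
        rw [W0.coord_Q_of_ge x i h, W0.coord_Q_of_ge y i h']

end Helpers

/-- The equivalence relation `R` on `A = Π_n X_n^∞` defined by `x R y` iff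
`Q(x) = Q(y)` (equivalently, `x` and `y` are truncated at the same place and agree
before that place) is a closed subset of `A × A`. -/
theorem stmt7 (X : ℕ → Type) [∀ n, TopologicalSpace (X n)]
    [∀ n, LocallyCompactSpace (X n)] [∀ n, SecondCountableTopology (X n)]
    [∀ n, T2Space (X n)] :
    IsClosed {p : (∀ n, OnePoint (X n)) × (∀ n, OnePoint (X n)) |
      W0.Q p.1 = W0.Q p.2} := by
  have hset : {p : (∀ n, OnePoint (X n)) × (∀ n, OnePoint (X n)) |
      W0.Q p.1 = W0.Q p.2} = ⋂ n, ({p : (∀ n, OnePoint (X n)) × (∀ n, OnePoint (X n)) |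
        p.1 n = p.2 n} ∪
      ({p | ∃ i ≤ n, p.1 i = OnePoint.infty} ∩ {p | ∃ i ≤ n, p.2 i = OnePoint.infty})) := by
    ext p
    simp only [Set.mem_setOf_eq, Set.mem_iInter, Set.mem_union, Set.mem_inter_iff]
    exact W0.Q_eq_Q_iff p.1 p.2
  rw [hset]
  refine isClosed_iInter fun n => IsClosed.union ?_ (IsClosed.inter ?_ ?_)
  · exact isClosed_eq ((continuous_apply n).comp continuous_fst)
      ((continuous_apply n).comp continuous_snd)
  · have : {p : (∀ n, OnePoint (X n)) × (∀ n, OnePoint (X n)) |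
        ∃ i ≤ n, p.1 i = OnePoint.infty} =
        ⋃ i ∈ Set.Iic n, (fun p : (∀ n, OnePoint (X n)) × (∀ n, OnePoint (X n)) =>
          p.1 i) ⁻¹' {OnePoint.infty} := by
      ext p; simp [Set.mem_setOf_eq]
    rw [this]
    exact Set.Finite.isClosed_biUnion (Set.finite_Iic n) fun i _ =>
      isClosed_singleton.preimage ((continuous_apply i).comp continuous_fst)
  · have : {p : (∀ n, OnePoint (X n)) × (∀ n, OnePoint (X n)) |
        ∃ i ≤ n, p.2 i = OnePoint.infty} =
        ⋃ i ∈ Set.Iic n, (fun p : (∀ n, OnePoint (X n)) × (∀ n, OnePoint (X n)) =>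
          p.2 i) ⁻¹' {OnePoint.infty} := by
      ext p; simp [Set.mem_setOf_eq]
    rw [this]
    exact Set.Finite.isClosed_biUnion (Set.finite_Iic n) fun i _ =>
      isClosed_singleton.preimage ((continuous_apply i).comp continuous_snd)
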